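/- arXiv:math/9812115 — 2 statements merged into one kernel-verified Lean document; each statement's English description precedes it below -/
import Mathlib

section
/- Let T be an Aronszajn tree (in which every node has ℵ₀ many immediate successors). Then every condition of the poset S₂(T) can be extended to any countable height: for every f ∈ S₂(T) with dom f = T↾(α+1) and every β with α ≤ β < ω₁ there is g ∈ S₂(T) with f ⊆ g and dom g = T↾(β+1). -/
noncomputable section

open Cardinal Set

/-- The first uncountable ordinal. -/
def omega1 : Ordinal.{0} := (Cardinal.aleph 1).ord

universe u v w

/-- A carrier together with a strict order relation and a level function. -/
structure PreTree (α : Type u) where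
  lt : α → α → Prop
  lev : α → Ordinal.{u_1}

namespace PreTree

variable {α : Type u}

/-- reflexive closure of the tree order -/
def le (T : PreTree α) (x y : α) : Prop := x = y ∨ T.lt x y

/-- tree axioms: the relation is transitive, the level function is strictly increasing,
the predecessors of any node are linearly ordered and there is exactly one predecessor
at each smaller level (so the predecessors are well-ordered of order type `lev x`). -/
def IsTree (T : PreTree α) : Prop :=
  (∀ x y z, T.lt x y → T.lt y z → T.lt x z) ∧
  (∀ x y, T.lt x y → T.lev x < T.lev y) ∧
  (∀ x y z, T.lt y x → T.lt z x → y = z ∨ T.lt y z ∨ T.lt z y) ∧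
  (∀ x o, o < T.lev x → ∃! y, T.lt y x ∧ T.lev y = o)

/-- an ω₁-tree: height ω₁, countable nonempty levels, each node has ℵ₀ many
immediate successors and extensions in every higher level below ω₁. -/
def IsOmega1Tree (T : PreTree α) : Prop :=
  T.IsTree ∧
  (∀ x, T.lev x < omega1) ∧
  (∀ o, o < omega1 → {x | T.lev x = o}.Countable) ∧
  (∀ o, o < omega1 → ∃ x, T.lev x = o) ∧
  (∀ x, {y | T.lt x y ∧ T.lev y = T.lev x + 1}.Infinite) ∧
  (∀ x o, T.lev x < o → o < omega1 → ∃ y, T.lt x y ∧ T.lev y = o)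

def IsAntichain' (T : PreTree α) (s : Set α) : Prop :=
  ∀ x ∈ s, ∀ y ∈ s, x ≠ y → ¬ T.lt x y ∧ ¬ T.lt y x

def IsChain' (T : PreTree α) (s : Set α) : Prop :=
  ∀ x ∈ s, ∀ y ∈ s, x = y ∨ T.lt x y ∨ T.lt y x

/-- a Suslin tree: an ω₁-tree with no uncountable antichain -/
def Suslin (T : PreTree α) : Prop :=
  T.IsOmega1Tree ∧ ∀ s : Set α, T.IsAntichain' s → s.Countable

/-- an Aronszajn tree: an ω₁-tree with no uncountable chain -/
def Aronszajn (T : PreTree α) : Prop :=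
  T.IsOmega1Tree ∧ ∀ s : Set α, T.IsChain' s → s.Countable

/-- a special tree: there is an order preserving map into ℚ -/
def Special (T : PreTree α) : Prop :=
  ∃ f : α → ℚ, ∀ x y, T.lt x y → f x < f y

end PreTree

/-- the carrier of the product of a family of trees: tuples of nodes of a common level -/
abbrev ProdCarrier {ι : Type u} {β : ι → Type v} (A : ∀ i, PreTree (β i)) : Type (max u v) :=
  {f : ∀ i, β i // ∃ o, ∀ i, (A i).lev (f i) = o}

/-- the product of a family of trees, ordered coordinatewise -/
def prodTree {ι : Type u} {β : ι → Type v} (A : ∀ i, PreTree (β i)) :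
    PreTree (ProdCarrier A) where
  lt f g := ∀ i, (A i).lt (f.1 i) (g.1 i)
  lev f := ⨆ i, (A i).lev (f.1 i)

/-- the carrier of the product of two trees -/
abbrev ProdCarrier₂ {α : Type u} {β : Type v} (A : PreTree α) (B : PreTree β) : Type (max u v) :=
  {p : α × β // A.lev p.1 = B.lev p.2}

/-- the product of two trees -/
def prodTree₂ {α : Type u} {β : Type v} (A : PreTree α) (B : PreTree β) :
    PreTree (ProdCarrier₂ A B) where
  lt p q := A.lt p.1.1 q.1.1 ∧ B.lt p.1.2 q.1.2
  lev p := A.lev p.1.1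

abbrev ConeCarrier {α : Type u} (T : PreTree α) (a : α) : Type u := {x : α // x = a ∨ T.lt a x}

/-- the subtree `T_a` of all extensions of `a`, with levels shifted to start at `0` -/
def cone {α : Type u} (T : PreTree α) (a : α) : PreTree (ConeCarrier T a) where
  lt x y := T.lt x.1 y.1
  lev x := T.lev x.1 - T.lev a

/-- the derived tree determined by a tuple of (distinct, same-level) nodes:
the product of the cones above the nodes -/
def derivedTree {α : Type u} (T : PreTree α) {n : ℕ} (a : Fin (n+1) → α) :
    PreTree (ProdCarrier (fun i => cone T (a i))) :=
  prodTree (fun i => cone T (a i))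

/-- every derived tree of `T` is a Suslin tree -/
def AllDerivedSuslin {α : Type u} (T : PreTree α) : Prop :=
  ∀ (n : ℕ) (a : Fin (n+1) → α), Function.Injective a →
    (∀ i, T.lev (a i) = T.lev (a 0)) → (derivedTree T a).Suslin

/-- carrier of the disjoint union of the trees with indices in the finite set `d` -/
abbrev UnionCarrier {I : Type u} (β : I → Type v) (d : Finset I) : Type (max u v) :=
  {p : Sigma β // p.1 ∈ d}

/-- the disjoint union of the trees with indices in `d` -/
def unionTree {I : Type u} {β : I → Type v} (A : ∀ ζ, PreTree (β ζ)) (d : Finset I) :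
    PreTree (UnionCarrier β d) where
  lt x y := ∃ h : x.1.1 = y.1.1, (A y.1.1).lt (cast (congrArg β h) x.1.2) y.1.2
  lev x := (A x.1.1).lev x.1.2

/-! clubs, stationary sets and the diamond principle on ω₁ -/

/-- `C` is a closed unbounded subset of ω₁ -/
def IsClubO1 (C : Set Ordinal) : Prop :=
  (∀ c ∈ C, c < omega1) ∧
  (∀ o, o < omega1 → ∃ c ∈ C, o ≤ c) ∧
  (∀ o, o < omega1 → o ≠ 0 → (∀ b, o ≠ b + 1) →
    (∀ b, b < o → ∃ c ∈ C, b ≤ c ∧ c < o) → o ∈ C)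

/-- `S` is stationary in ω₁ -/
def StationaryO1 (S : Set Ordinal) : Prop :=
  ∀ C, IsClubO1 C → (S ∩ C).Nonempty

/-- the diamond principle ◇ on ω₁ -/
def DiamondO1 : Prop :=
  ∃ S : Ordinal → Set Ordinal,
    (∀ ξ, S ξ ⊆ Set.Iio ξ) ∧
    ∀ X : Set Ordinal, X ⊆ Set.Iio omega1 →
      StationaryO1 {ξ | ξ < omega1 ∧ X ∩ Set.Iio ξ = S ξ}

/-! ω₁-like orders, parity, patterns -/

/-- `j` is the immediate successor of `i` -/
def ISucc {I : Type u} [LinearOrder I] (i j : I) : Prop :=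
  i < j ∧ ∀ k, i < k → j ≤ k

/-- `j` is the `n`-th iterated immediate successor of `i` -/
def IterSucc {I : Type u} [LinearOrder I] : ℕ → I → I → Prop
  | 0, i, j => i = j
  | n+1, i, j => ∃ k, IterSucc n i k ∧ ISucc k j

/-- `i` is a limit point: not an immediate successor (least elements count as limits) -/
def ILimit {I : Type u} [LinearOrder I] (i : I) : Prop := ¬ ∃ j, ISucc j i

/-- `i` is even: of the form `δ + n` with `δ` a limit and `n` even -/
def IEven {I : Type u} [LinearOrder I] (i : I) : Prop :=
  ∃ (δ : I) (n : ℕ), ILimit δ ∧ Even n ∧ IterSucc n δ i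

/-- `i` is odd: of the form `δ + n` with `δ` a limit and `n` odd -/
def IOdd {I : Type u} [LinearOrder I] (i : I) : Prop :=
  ∃ (δ : I) (n : ℕ), ILimit δ ∧ Odd n ∧ IterSucc n δ i

/-- an ω₁-like order: uncountable, proper initial segments countable,
with a least element, and every element has an immediate successor -/
def IsOmega1Like (I : Type u) [LinearOrder I] : Prop :=
  ¬ (Set.univ : Set I).Countable ∧
  (∀ i : I, {j | j < i}.Countable) ∧
  (∃ b : I, ∀ i, b ≤ i) ∧
  (∀ i : I, ∃ j, ISucc i j)

/-- the initial segment below `δ` is well-ordered, of order type `ot` -/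
def SegType {I : Type u} [LinearOrder I] (δ : I) (ot : Ordinal.{0}) : Prop :=
  ∃ h : IsWellOrder {j : I // j < δ} (fun a b => a < b),
    @Ordinal.type {j : I // j < δ} (fun a b => a < b) h = Ordinal.lift.{u, 0} ot

open Classical in
/-- the finite set `{a, b, c, d}` -/
def quadF {I : Type u} (a b c d : I) : Finset I := {a, b, c, d}

/-- a pattern over `I`: `sp` consists of nonempty finite subsets of `I` closed under
supersets, and `su` is its complement among the nonempty finite subsets -/
def IsPatternI {I : Type u} (su sp : Set (Finset I)) : Prop :=
  (∀ e ∈ sp, e.Nonempty) ∧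
  (∀ e ∈ sp, ∀ e' : Finset I, e ⊆ e' → e' ∈ sp) ∧
  su = {e | e.Nonempty ∧ e ∉ sp}

/-- `E` assigns to each countable limit ordinal `δ ≠ 0` a canonical code `E δ ⊆ ω`
of a well-order of ω of order type `δ` -/
def GoodCodes (E : Ordinal → Set ℕ) : Prop :=
  E 0 = ∅ ∧
  ∀ δ : Ordinal, δ < omega1 → δ ≠ 0 → (∀ b, δ ≠ b + 1) →
    ∃ (r : ℕ → ℕ → Prop) (h : IsWellOrder ℕ r),
      @Ordinal.type ℕ r h = δ ∧ E δ = {m | ∃ a b, r a b ∧ m = Nat.pair a b}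

/-- a simple pattern: the pattern respects the "simplicity table" -/
def IsSimplePatternI {I : Type u} [LinearOrder I] (E : Ordinal → Set ℕ)
    (su sp : Set (Finset I)) : Prop :=
  IsPatternI su sp ∧
  -- Suslin column: all triples, pairs and singletons
  (∀ e : Finset I, e.Nonempty → e.card ≤ 3 → e ∈ su) ∧
  -- Suslin column: quadruples
  (∀ ζ₁ ζ₂ ζ₃ ζ₄ : I, ζ₁ < ζ₂ → ζ₂ < ζ₃ → ζ₃ < ζ₄ →
    ((IEven ζ₁ ∧ IEven ζ₂ ∧ IEven ζ₃ ∧ IEven ζ₄) ∨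
     (IOdd ζ₁ ∧ IOdd ζ₂ ∧ IOdd ζ₃ ∧ IOdd ζ₄) ∨
     (IOdd ζ₁ ∧ IEven ζ₂ ∧ IOdd ζ₃ ∧ IEven ζ₄) ∨
     (IOdd ζ₁ ∧ IEven ζ₂ ∧ IEven ζ₃ ∧ IOdd ζ₄) ∨
     (ILimit ζ₁ ∧ IEven ζ₂ ∧ IOdd ζ₃ ∧ IOdd ζ₄) ∨
     (ISucc ζ₁ ζ₂ ∧ IOdd ζ₃ ∧ IOdd ζ₄)) →
    quadF ζ₁ ζ₂ ζ₃ ζ₄ ∈ su) ∧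
  (∀ (δ : I) (ot : Ordinal) (i : ℕ) (x1 x3 x4 xi : I),
    ILimit δ → SegType δ ot →
    IterSucc 1 δ x1 → IterSucc 3 δ x3 → IterSucc 4 δ x4 → IterSucc (5+i) δ xi →
    i ∈ E ot → quadF x1 x3 x4 xi ∈ su) ∧
  -- special column: all quintuples (and larger sets)
  (∀ e : Finset I, 5 ≤ e.card → e ∈ sp) ∧
  -- special column: quadruples
  (∀ ζ₁ ζ₂ ζ₃ ζ₄ : I, ζ₁ < ζ₂ → ζ₂ < ζ₃ → ζ₃ < ζ₄ →
    ((IEven ζ₁ ∧ IOdd ζ₂ ∧ IEven ζ₃ ∧ IOdd ζ₄) ∨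
     (IOdd ζ₁ ∧ IEven ζ₂ ∧ IEven ζ₃ ∧ IEven ζ₄) ∨
     (IEven ζ₁ ∧ ¬ ILimit ζ₁ ∧ IEven ζ₂ ∧ IOdd ζ₃ ∧ IOdd ζ₄) ∨
     (((IEven ζ₁ ∧ IOdd ζ₂) ∨ (IOdd ζ₁ ∧ IEven ζ₂)) ∧ ¬ ISucc ζ₁ ζ₂ ∧ IOdd ζ₃ ∧ IOdd ζ₄)) →
    quadF ζ₁ ζ₂ ζ₃ ζ₄ ∈ sp) ∧
  (∀ (δ : I) (ot : Ordinal) (i : ℕ) (x1 x3 x4 xi : I),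
    ILimit δ → SegType δ ot →
    IterSucc 1 δ x1 → IterSucc 3 δ x3 → IterSucc 4 δ x4 → IterSucc (5+i) δ xi →
    i ∉ E ot → quadF x1 x3 x4 xi ∈ sp)

/-- the ordinals below ω₁, as a linear order -/
abbrev O1 : Type 1 := {o : Ordinal // o < omega1}

theorem nat_lt_omega1 (n : ℕ) : (n : Ordinal) < omega1 := by
  have h1 : (n : Ordinal) < Ordinal.omega0 := Ordinal.nat_lt_omega0 n
  have h2 : Ordinal.omega0 ≤ omega1 := by
    rw [← Cardinal.ord_aleph0]
    exact Cardinal.ord_le_ord.mpr (Cardinal.aleph0_le_aleph 1)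
  exact h1.trans_le h2

/-- the natural number `n` as an element of `O1` -/
def o1 (n : ℕ) : O1 := ⟨(n : Ordinal), nat_lt_omega1 n⟩

/-- the sequence of trees realizes the pattern `(su, sp)`: for `d ∈ su` the disjoint
union `T^d` and all of its derived trees are Suslin, and for `d ∈ sp` the full
product `T^(d)` is special -/
def HasPattern {I : Type u} {β : I → Type v} (A : ∀ ζ, PreTree (β ζ))
    (su sp : Set (Finset I)) : Prop :=
  (∀ d ∈ su, (unionTree A d).Suslin ∧ AllDerivedSuslin (unionTree A d)) ∧
  (∀ d ∈ sp, (prodTree (fun ζ : {x // x ∈ d} => A ζ.1)).Special)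

/-- a club-embedding of `A` into `B`: a level-preserving order-embedding defined on
the restriction of `A` to a club set of levels -/
def ClubEmbeds {α : Type u} {β : Type v} (A : PreTree α) (B : PreTree β) : Prop :=
  ∃ C : Set Ordinal, IsClubO1 C ∧
    ∃ h : {x : α // A.lev x ∈ C} → β,
      Function.Injective h ∧
      (∀ x, B.lev (h x) = A.lev x.1) ∧
      (∀ x y, A.lt x.1 y.1 ↔ B.lt (h x) (h y))

/-- the collection `{T^d : d ∈ su}` is primal: every derived tree of every member is
Suslin, and every Suslin tree contains a club-embedded copy of a derived tree of a member -/
def Primal {I : Type u} {β : I → Type v} (A : ∀ ζ, PreTree (β ζ)) (su : Set (Finset I)) : Prop :=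
  (∀ d ∈ su, (unionTree A d).Suslin ∧ AllDerivedSuslin (unionTree A d)) ∧
  ∀ (γ : Type w) (S : PreTree γ), S.Suslin →
    ∃ d ∈ su, ∃ (n : ℕ) (a : Fin (n+1) → UnionCarrier β d),
      Function.Injective a ∧
      (∀ i, (unionTree A d).lev (a i) = (unionTree A d).lev (a 0)) ∧
      ClubEmbeds (derivedTree (unionTree A d) a) S

/-! the specializing poset S(T) -/

/-- domain of a partial function into ℚ -/
def pdom {α : Type u} (h : α → Option ℚ) : Set α := {x | h x ≠ none}

/-- the finite function `h` (living on level ≥ a) bounds the approximation `f`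
(with `last f = a`): on each point of its domain it is strictly above the value of `f`
at the unique level-`a` restriction of the point -/
def Bounds {α : Type u} (T : PreTree α) (a : Ordinal) (f h : α → Option ℚ) : Prop :=
  ∀ x q, h x = some q → ∃ y r, T.le y x ∧ T.lev y = a ∧ f y = some r ∧ r < q

/-- a requirement of height `γ` and arity `n` -/
def IsRequirement {α : Type u} (T : PreTree α) (γ : Ordinal) (n : ℕ)
    (H : Set (α → Option ℚ)) : Prop :=
  ∀ h ∈ H, (pdom h).Finite ∧ (pdom h).ncard = n ∧ ∀ x ∈ pdom h, T.lev x = γ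

/-- the requirement `H` of height `γ` is dispersed -/
def DispersedReq {α : Type u} (T : PreTree α) (γ : Ordinal) (H : Set (α → Option ℚ)) : Prop :=
  ∀ t : Set α, t.Finite → t ⊆ {x | T.lev x = γ} → ∃ h ∈ H, ∀ x ∈ t, h x = none

/-- `h'` is the restriction `h↾γ` of the finite function `h` to level `γ`:
`h'(x↾γ) = h(x)` -/
def IsRestrictTo {α : Type u} (T : PreTree α) (γ : Ordinal) (h h' : α → Option ℚ) : Prop :=
  (∀ y, h' y ≠ none ↔ (T.lev y = γ ∧ ∃ x, T.le y x ∧ h x ≠ none)) ∧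
  (∀ y x, T.lev y = γ → T.le y x → h x ≠ none → h' y = h x)

/-- the approximation `f` (with `last f = a`) fulfills the requirement `H` of height `a` -/
def FulfillsReq {α : Type u} (T : PreTree α) (a : Ordinal) (f : α → Option ℚ)
    (H : Set (α → Option ℚ)) : Prop :=
  ∀ t : Set α, t.Finite → t ⊆ {x | T.lev x = a} →
    ∃ h ∈ H, Bounds T a f h ∧ ∀ x ∈ t, h x = none

/-- an approximation: a partial specializing function defined exactly on the nodes of
level ≤ a -/
def IsApprox {α : Type u} (T : PreTree α) (a : Ordinal) (f : α → Option ℚ) : Prop :=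
  a < omega1 ∧
  (∀ x, f x ≠ none ↔ T.lev x ≤ a) ∧
  (∀ x y qx qy, T.lt x y → f x = some qx → f y = some qy → qx < qy)

/-- a promise with base `b`: countable nonempty coherent sets of dispersed requirements,
one for each level `γ` with `b ≤ γ < ω₁`, all of one fixed arity -/
def IsPromise {α : Type u} (T : PreTree α) (b : Ordinal)
    (Γ : Ordinal → Set (Set (α → Option ℚ))) : Prop :=
  b < omega1 ∧
  (∃ n : ℕ, ∀ γ, b ≤ γ → γ < omega1 → ∀ H ∈ Γ γ, IsRequirement T γ n H) ∧
  (∀ γ, b ≤ γ → γ < omega1 →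
    (Γ γ).Countable ∧ (Γ γ).Nonempty ∧ ∀ H ∈ Γ γ, DispersedReq T γ H) ∧
  (∀ γ₀ γ₁, b ≤ γ₀ → γ₀ < γ₁ → γ₁ < omega1 →
    Γ γ₀ = {H' | ∃ H ∈ Γ γ₁, H' = {h' | ∃ h ∈ H, IsRestrictTo T γ₀ h h'}})

/-- a condition of the specializing poset `S(T)`: an approximation together with a
promise which it fulfills -/
structure SCond {α : Type u} (T : PreTree α) where
  last : Ordinal
  f : α → Option ℚ
  base : Ordinal
  Γ : Ordinal → Set (Set (α → Option ℚ))
  approx : IsApprox T last f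
  promise : IsPromise T base Γ
  base_le : base ≤ last
  fulfills : ∀ H ∈ Γ last, FulfillsReq T last f H

/-- `q` extends `p` in `S(T)` -/
def SExtends {α : Type u} {T : PreTree α} (q p : SCond T) : Prop :=
  p.last ≤ q.last ∧
  (∀ x, p.f x ≠ none → q.f x = p.f x) ∧
  ∀ γ, q.last ≤ γ → γ < omega1 → p.Γ γ ⊆ q.Γ γ

/-! the naive specializing poset S₂(T) -/

/-- a condition of the poset `S₂(T)` -/
def IsS2Cond {α : Type u} (T : PreTree α) (a : Ordinal) (f : α → Option ℚ) : Prop :=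
  IsApprox T a f ∧
  ∀ a₀, a₀ < a → ∀ (n : ℕ) (x : Fin (n+1) → α) (q : Fin (n+1) → ℚ),
    (∀ i, T.lev (x i) = a₀) →
    (∀ i, ∃ r, f (x i) = some r ∧ r < q i) →
    ∃ y : Fin (n+1) → α, ∀ i, T.lt (x i) (y i) ∧ T.lev (y i) = a ∧ f (y i) = some (q i)

/-- the disjoint union of two trees -/
def sumTree {α : Type u} {β : Type v} (A : PreTree α) (B : PreTree β) : PreTree (α ⊕ β) where
  lt x y :=
    match x, y with
    | Sum.inl a, Sum.inl b => A.lt a b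
    | Sum.inr a, Sum.inr b => B.lt a b
    | _, _ => False
  lev := Sum.elim A.lev B.lev

namespace S2Ext

variable {α : Type}

/-! ### basic tree helpers -/

lemma tree_irrefl {T : PreTree α} (h : T.IsTree) (x : α) : ¬ T.lt x x :=
  fun hx => lt_irrefl _ (h.2.1 x x hx)

lemma le_lev {T : PreTree α} (h : T.IsTree) {x y : α} (hxy : T.le x y) :
    T.lev x ≤ T.lev y := by
  rcases hxy with rfl | hxy
  · exact le_rfl
  · exact (h.2.1 _ _ hxy).le

lemma le_same_lev {T : PreTree α} (h : T.IsTree) {u v y : α}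
    (hu : T.le u y) (hv : T.le v y) (huv : T.lev u = T.lev v) : u = v := by
  rcases hu with rfl | hu <;> rcases hv with rfl | hv
  · rfl
  · have := h.2.1 _ _ hv; rw [huv] at this; exact absurd this (lt_irrefl _)
  · have := h.2.1 _ _ hu; rw [← huv] at this; exact absurd this (lt_irrefl _)
  · rcases h.2.2.1 y u v hu hv with h' | h' | h'
    · exact h'
    · have := h.2.1 _ _ h'; rw [huv] at this; exact absurd this (lt_irrefl _)
    · have := h.2.1 _ _ h'; rw [← huv] at this; exact absurd this (lt_irrefl _)

lemma le_trans' {T : PreTree α} (h : T.IsTree) {x y z : α}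
    (hxy : T.le x y) (hyz : T.le y z) : T.le x z := by
  rcases hxy with rfl | hxy
  · exact hyz
  · rcases hyz with rfl | hyz
    · exact Or.inr hxy
    · exact Or.inr (h.1 _ _ _ hxy hyz)

/-- The fresh-node lemma: above `x` there is a node at level `b` avoiding a
finite set `A` of nodes none of which is `≤ x`. -/
lemma fresh {T : PreTree α} (hT : T.IsOmega1Tree) {b : Ordinal} (hb : b < omega1)
    {x : α} (hx : T.lev x < b) {A : Set α} (hA : A.Finite)
    (hAx : ∀ z ∈ A, ¬ T.le z x) :
    ∃ y, T.lt x y ∧ T.lev y = b ∧ ∀ z ∈ A, ¬ T.le z y := by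
  classical
  have ht := hT.1
  -- map each node strictly above x to its predecessor-or-self at level lev x + 1
  set c : α → α := fun z =>
    if h : T.lev x + 1 < T.lev z then (ht.2.2.2 z (T.lev x + 1) h).exists.choose else z
    with hc
  have hcz : ∀ z, T.lt x z → T.le (c z) z ∧ T.lev (c z) = T.lev x + 1 := by
    intro z hz
    by_cases h : T.lev x + 1 < T.lev z
    · have hspec := (ht.2.2.2 z (T.lev x + 1) h).exists.choose_spec
      simp only [hc, dif_pos h]
      exact ⟨Or.inr hspec.1, hspec.2⟩
    · have h1 : T.lev x < T.lev z := ht.2.1 _ _ hz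
      have h2 : T.lev x + 1 ≤ T.lev z := by
        rw [Ordinal.add_one_eq_succ]; exact Order.succ_le_iff.mpr h1
      have h3 : T.lev z = T.lev x + 1 := le_antisymm (not_lt.mp h) h2
      simp only [hc, dif_neg h]
      exact ⟨Or.inl rfl, h3⟩
  -- choose an immediate successor of x avoiding the images of A
  have hinf : {s | T.lt x s ∧ T.lev s = T.lev x + 1}.Infinite := hT.2.2.2.2.1 x
  obtain ⟨s, hs⟩ := (hinf.diff (hA.image c)).nonempty
  obtain ⟨⟨hxs, hslev⟩, hsim⟩ := hs
  -- key claim: any y with s ≤ y avoids A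
  have key : ∀ y, T.le s y → T.lt x y → ∀ z ∈ A, ¬ T.le z y := by
    intro y hsy hxy z hzA hzy
    have hxz : T.lt x z := by
      rcases hzy with rfl | hzy
      · exact hxy
      · rcases ht.2.2.1 y z x hzy hxy with h' | h' | h'
        · exact absurd (Or.inl h') (hAx z hzA)
        · exact absurd (Or.inr h') (hAx z hzA)
        · exact h'
    obtain ⟨hcle, hclev⟩ := hcz z hxz
    have h1 : T.le (c z) y := le_trans' ht hcle hzy
    have h2 : c z = s := le_same_lev ht h1 hsy (by rw [hclev, hslev])
    exact hsim ⟨z, hzA, h2⟩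
  by_cases hsb : T.lev s = b
  · exact ⟨s, hxs, hsb, key s (Or.inl rfl) hxs⟩
  · have hsltb : T.lev s < b := by
      rw [hslev]
      rw [Ordinal.add_one_eq_succ]
      exact lt_of_le_of_ne (Order.succ_le_iff.mpr hx)
        (by rw [← Ordinal.add_one_eq_succ, ← hslev]; exact hsb)
    obtain ⟨y, hsy, hyb⟩ := hT.2.2.2.2.2 s b hsltb hb
    exact ⟨y, ht.1 _ _ _ hxs hsy, hyb, key y (Or.inr hsy) (ht.1 _ _ _ hxs hsy)⟩

/-! ### finite conditions -/

/-- the invariant for the finite side conditions of the construction -/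
def Good (T : PreTree α) (a b : Ordinal) (f : α → Option ℚ) (p : α → Option ℚ) : Prop :=
  {x | p x ≠ none}.Finite ∧
  (∀ x, p x ≠ none → a < T.lev x ∧ T.lev x ≤ b) ∧
  (∀ x y qx qy, T.lt x y → p x = some qx → p y = some qy → qx < qy) ∧
  (∀ x y qx qy, T.lt x y → T.lev x ≤ a → f x = some qx → p y = some qy → qx < qy)

def Extends (p' p : α → Option ℚ) : Prop := ∀ x, p x ≠ none → p' x = p x

/-- the value of the union of `f` and `p` -/
def gval (T : PreTree α) (a : Ordinal) (f p : α → Option ℚ) (x : α) : Option ℚ :=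
  if T.lev x ≤ a then f x else p x

lemma good_empty (T : PreTree α) (a b : Ordinal) (f : α → Option ℚ) :
    Good T a b f (fun _ => none) := by
  refine ⟨by simp, by simp, by simp, by simp⟩

/-- dense set 1: any node of level in `(a, b]` can be added to the domain -/
lemma dense1 {T : PreTree α} {a b : Ordinal} {f : α → Option ℚ}
    (hT : T.Aronszajn) (hf : IsS2Cond T a f) {p : α → Option ℚ}
    (hp : Good T a b f p) {z : α} (hz1 : a < T.lev z) (hz2 : T.lev z ≤ b) :
    ∃ p', Good T a b f p' ∧ Extends p' p ∧ p' z ≠ none := by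
  classical
  have ht := hT.1.1
  by_cases hzp : p z ≠ none
  · exact ⟨p, hp, fun _ _ => rfl, hzp⟩
  push_neg at hzp
  -- the restriction of z to level a
  obtain ⟨w, ⟨hwz, hwa⟩, -⟩ := ht.2.2.2 z a hz1
  have hfw : f w ≠ none := (hf.1.2.1 w).mpr (le_of_eq hwa)
  obtain ⟨r0, hr0⟩ := Option.ne_none_iff_exists'.mp hfw
  -- finite sets of values to separate
  set vp : α → ℚ := fun t => (p t).getD 0 with hvp
  have hvpeq : ∀ t q, p t = some q → vp t = q := by
    intro t q hq; simp [hvp, hq]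
  set L : Set ℚ := insert r0 (vp '' {t | p t ≠ none ∧ T.lt t z}) with hL
  set U : Set ℚ := vp '' {t | p t ≠ none ∧ T.lt z t} with hU
  have hLfin : L.Finite := ((hp.1.subset (fun t ht => ht.1)).image vp).insert r0
  have hUfin : U.Finite := (hp.1.subset (fun t ht => ht.1)).image vp
  -- every element of L is < every element of U
  have key : ∀ l ∈ L, ∀ u ∈ U, l < u := by
    intro l hl u hu
    obtain ⟨t, ⟨htp, htz⟩, rfl⟩ := hu
    obtain ⟨qt, hqt⟩ := Option.ne_none_iff_exists'.mp htp
    rw [hvpeq t qt hqt]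
    rcases hl with rfl | ⟨t', ⟨ht'p, ht'z⟩, rfl⟩
    · exact hp.2.2.2 w t l qt (ht.1 _ _ _ hwz htz) (le_of_eq hwa) hr0 hqt
    · obtain ⟨qt', hqt'⟩ := Option.ne_none_iff_exists'.mp ht'p
      rw [hvpeq t' qt' hqt']
      exact hp.2.2.1 t' t qt' qt (ht.1 _ _ _ ht'z htz) hqt' hqt
  -- choose a separating value
  have hsep : ∃ v : ℚ, (∀ l ∈ L, l < v) ∧ (∀ u ∈ U, v < u) ∧ r0 < v := by
    have hLne : hLfin.toFinset.Nonempty := ⟨r0, by simp [hL]⟩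
    set lmax := hLfin.toFinset.max' hLne with hlmax
    have hlmaxL : lmax ∈ L := by
      have := hLfin.toFinset.max'_mem hLne; rwa [Set.Finite.mem_toFinset] at this
    have hr0lmax : r0 ≤ lmax := hLfin.toFinset.le_max' r0 (by simp [hL])
    by_cases hUe : hUfin.toFinset.Nonempty
    · set umin := hUfin.toFinset.min' hUe with humin
      have huminU : umin ∈ U := by
        have := hUfin.toFinset.min'_mem hUe; rwa [Set.Finite.mem_toFinset] at this
      have hlu : lmax < umin := key lmax hlmaxL umin huminU
      refine ⟨(lmax + umin) / 2, ?_, ?_, ?_⟩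
      · intro l hl
        have : l ≤ lmax := hLfin.toFinset.le_max' l (by rwa [Set.Finite.mem_toFinset])
        linarith
      · intro u hu
        have : umin ≤ u := hUfin.toFinset.min'_le u (by rwa [Set.Finite.mem_toFinset])
        linarith
      · linarith
    · refine ⟨lmax + 1, ?_, ?_, ?_⟩
      · intro l hl
        have : l ≤ lmax := hLfin.toFinset.le_max' l (by rwa [Set.Finite.mem_toFinset])
        linarith
      · intro u hu
        exact absurd ⟨u, by rwa [Set.Finite.mem_toFinset]⟩ hUe
      · linarith
  obtain ⟨v, hvL, hvU, hr0v⟩ := hsep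
  refine ⟨fun t => if t = z then some v else p t, ⟨?_, ?_, ?_, ?_⟩, ?_, by simp⟩
  · refine Set.Finite.subset (hp.1.insert z) ?_
    intro t ht
    by_cases h : t = z
    · exact Or.inl h
    · simp only [Set.mem_setOf_eq, if_neg h] at ht; exact Or.inr ht
  · intro t htne
    by_cases h : t = z
    · exact ⟨by rw [h]; exact hz1, by rw [h]; exact hz2⟩
    · simp only [if_neg h] at htne; exact hp.2.1 t htne
  · intro x y qx qy hxy hx hy
    by_cases hx' : x = z <;> by_cases hy' : y = z
    · rw [hx', hy'] at hxy; exact absurd hxy (tree_irrefl ht z)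
    · simp only [if_pos hx'] at hx
      simp only [if_neg hy'] at hy
      have hxv : qx = v := (Option.some_injective ℚ hx).symm
      have hyne : p y ≠ none := by rw [hy]; simp
      have hzy : T.lt z y := hx' ▸ hxy
      have : qy ∈ U := ⟨y, ⟨hyne, hzy⟩, hvpeq y qy hy⟩
      rw [hxv]
      exact hvU qy this
    · simp only [if_pos hy'] at hy
      simp only [if_neg hx'] at hx
      have hyv : qy = v := (Option.some_injective ℚ hy).symm
      have hxne : p x ≠ none := by rw [hx]; simp
      have hxz : T.lt x z := hy' ▸ hxy
      have : qx ∈ L := Or.inr ⟨x, ⟨hxne, hxz⟩, hvpeq x qx hx⟩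
      rw [hyv]
      exact hvL qx this
    · simp only [if_neg hx'] at hx
      simp only [if_neg hy'] at hy
      exact hp.2.2.1 x y qx qy hxy hx hy
  · intro x y qx qy hxy hxa hfx hy
    by_cases hy' : y = z
    · simp only [if_pos hy'] at hy
      have hyv : qy = v := (Option.some_injective ℚ hy).symm
      have hxz : T.lt x z := hy' ▸ hxy
      -- x is below z at level ≤ a, so x ≤ w, hence qx ≤ r0
      have hqxr0 : qx ≤ r0 := by
        rcases ht.2.2.1 z x w hxz hwz with h' | h' | h'
        · rw [h', hr0] at hfx
          exact ((Option.some_injective ℚ hfx).symm).le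
        · exact (hf.1.2.2 x w qx r0 h' hfx hr0).le
        · have := ht.2.1 _ _ h'
          rw [hwa] at this
          exact absurd (lt_of_lt_of_le this hxa) (lt_irrefl _)
      rw [hyv]
      exact lt_of_le_of_lt hqxr0 hr0v
    · simp only [if_neg hy'] at hy
      exact hp.2.2.2 x y qx qy hxy hxa hfx hy
  · intro t htne
    have h : t ≠ z := fun h => htne (h ▸ hzp)
    simp [if_neg h]

/-- dense set 2: realizing an exact value at level `b` above a node `x0` -/
lemma dense2 {T : PreTree α} {a b : Ordinal} {f : α → Option ℚ}
    (hT : T.Aronszajn) (hf : IsS2Cond T a f) (hb : b < omega1) {p : α → Option ℚ}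
    (hp : Good T a b f p) {x0 : α} {q0 : ℚ} (hx1 : a ≤ T.lev x0) (hx2 : T.lev x0 < b)
    (hx3 : ∃ v, gval T a f p x0 = some v ∧ v < q0) :
    ∃ p', Good T a b f p' ∧ Extends p' p ∧
      ∃ y, T.lt x0 y ∧ T.lev y = b ∧ p' y = some q0 := by
  classical
  have ht := hT.1.1
  obtain ⟨v, hv, hvq⟩ := hx3
  set A : Set α := {z | p z ≠ none ∧ ¬ T.le z x0} with hA
  have hAfin : A.Finite := hp.1.subset (fun t ht => ht.1)
  have hAx : ∀ z ∈ A, ¬ T.le z x0 := fun z hz => hz.2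
  obtain ⟨y, hxy, hyb, hyav⟩ := fresh hT.1 hb hx2 hAfin hAx
  have hpy : p y = none := by
    by_contra hpy
    by_cases h : T.le y x0
    · have := le_lev ht h
      rw [hyb] at this
      exact absurd (lt_of_le_of_lt this hx2) (lt_irrefl _)
    · exact hyav y ⟨hpy, h⟩ (Or.inl rfl)
  refine ⟨fun t => if t = y then some q0 else p t, ⟨?_, ?_, ?_, ?_⟩, ?_,
    ⟨y, hxy, hyb, by simp⟩⟩
  · refine Set.Finite.subset (hp.1.insert y) ?_
    intro t htn
    by_cases h : t = y
    · exact Or.inl h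
    · simp only [Set.mem_setOf_eq, if_neg h] at htn; exact Or.inr htn
  · intro t htn
    by_cases h : t = y
    · refine ⟨?_, ?_⟩
      · rw [h, hyb]; exact lt_of_le_of_lt hx1 hx2
      · rw [h, hyb]
    · simp only [if_neg h] at htn; exact hp.2.1 t htn
  · intro s t qs qt hst hs hts
    by_cases hs' : s = y <;> by_cases ht' : t = y
    · rw [hs', ht'] at hst; exact absurd hst (tree_irrefl ht y)
    · simp only [if_neg ht'] at hts
      have h2 := hp.2.1 t (by rw [hts]; simp)
      have hyt : T.lt y t := hs' ▸ hst
      have := ht.2.1 _ _ hyt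
      rw [hyb] at this
      exact absurd (lt_of_lt_of_le this h2.2) (lt_irrefl _)
    · simp only [if_pos ht'] at hts
      simp only [if_neg hs'] at hs
      have htv : qt = q0 := (Option.some_injective ℚ hts).symm
      have hsy : T.lt s y := ht' ▸ hst
      have hsne : p s ≠ none := by rw [hs]; simp
      -- s < y and s is in dom p, so s ≤ x0
      have hsx0 : T.le s x0 := by
        by_contra h
        exact hyav s ⟨hsne, h⟩ (Or.inr hsy)
      have hax0 : a < T.lev x0 := by
        rcases hsx0 with heq | hsx0
        · exact heq ▸ (hp.2.1 s hsne).1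
        · exact lt_trans (hp.2.1 s hsne).1 (ht.2.1 _ _ hsx0)
      have hvx0 : p x0 = some v := by
        rw [gval, if_neg (not_le.mpr hax0)] at hv; exact hv
      rw [htv]
      rcases hsx0 with heq | hsx0
      · rw [heq, hvx0] at hs
        exact (Option.some_injective ℚ hs) ▸ hvq
      · exact lt_trans (hp.2.2.1 s x0 qs v hsx0 hs hvx0) hvq
    · simp only [if_neg hs'] at hs
      simp only [if_neg ht'] at hts
      exact hp.2.2.1 s t qs qt hst hs hts
  · intro s t qs qt hst hsa hfs hts
    by_cases ht' : t = y
    · simp only [if_pos ht'] at hts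
      have htv : qt = q0 := (Option.some_injective ℚ hts).symm
      have hsy : T.lt s y := ht' ▸ hst
      rw [htv]
      -- s < y with lev s ≤ a; compare with x0
      by_cases hx0a : T.lev x0 ≤ a
      · have hfx0 : f x0 = some v := by rw [gval, if_pos hx0a] at hv; exact hv
        rcases ht.2.2.1 y s x0 hsy hxy with h' | h' | h'
        · rw [h', hfx0] at hfs
          exact (Option.some_injective ℚ hfs) ▸ hvq
        · exact lt_trans (hf.1.2.2 s x0 qs v h' hfs hfx0) hvq
        · have := ht.2.1 _ _ h'
          exact absurd (lt_of_le_of_lt hx1 (lt_of_lt_of_le this hsa)) (lt_irrefl _)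
      · push_neg at hx0a
        have hvx0 : p x0 = some v := by
          rw [gval, if_neg (not_le.mpr hx0a)] at hv; exact hv
        rcases ht.2.2.1 y s x0 hsy hxy with h' | h' | h'
        · rw [h'] at hsa
          exact absurd (lt_of_lt_of_le hx0a hsa) (lt_irrefl _)
        · exact lt_trans (hp.2.2.2 s x0 qs v h' hsa hfs hvx0) hvq
        · have := ht.2.1 _ _ h'
          exact absurd (lt_of_lt_of_le (lt_trans hx0a this) hsa) (lt_irrefl _)
    · simp only [if_neg ht'] at hts
      exact hp.2.2.2 s t qs qt hst hsa hfs hts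
  · intro t htn
    have h : t ≠ y := fun h => htn (h ▸ hpy)
    simp [if_neg h]

/-! ### the recursive construction -/

open Classical in
/-- one step of the construction, scheduled by the code `n` -/
noncomputable def step {T : PreTree α} {a b : Ordinal} {f : α → Option ℚ}
    (hT : T.Aronszajn) (hf : IsS2Cond T a f) (hb : b < omega1)
    (u : ℕ → α) (qe : ℕ → ℚ) (p : α → Option ℚ) (n : ℕ) : α → Option ℚ :=
  if (Nat.unpair (Nat.unpair n).1).1 = 0 then
    if h : Good T a b f p ∧ a < T.lev (u (Nat.unpair (Nat.unpair n).1).2) ∧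
        T.lev (u (Nat.unpair (Nat.unpair n).1).2) ≤ b
    then Classical.choose (dense1 hT hf h.1 h.2.1 h.2.2)
    else p
  else
    if h : Good T a b f p ∧
        a ≤ T.lev (u (Nat.unpair (Nat.unpair (Nat.unpair n).1).2).1) ∧
        T.lev (u (Nat.unpair (Nat.unpair (Nat.unpair n).1).2).1) < b ∧
        ∃ v, gval T a f p (u (Nat.unpair (Nat.unpair (Nat.unpair n).1).2).1) = some v ∧
          v < qe (Nat.unpair (Nat.unpair (Nat.unpair n).1).2).2
    then Classical.choose (dense2 hT hf hb h.1 h.2.1 h.2.2.1 h.2.2.2)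
    else p

/-- the sequence of finite conditions -/
noncomputable def seqP {T : PreTree α} {a b : Ordinal} {f : α → Option ℚ}
    (hT : T.Aronszajn) (hf : IsS2Cond T a f) (hb : b < omega1)
    (u : ℕ → α) (qe : ℕ → ℚ) : ℕ → α → Option ℚ
  | 0 => fun _ => none
  | n+1 => step hT hf hb u qe (seqP hT hf hb u qe n) n

lemma step_good {T : PreTree α} {a b : Ordinal} {f : α → Option ℚ}
    (hT : T.Aronszajn) (hf : IsS2Cond T a f) (hb : b < omega1)
    (u : ℕ → α) (qe : ℕ → ℚ) {p : α → Option ℚ} (hp : Good T a b f p) (n : ℕ) :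
    Good T a b f (step hT hf hb u qe p n) ∧ Extends (step hT hf hb u qe p n) p := by
  classical
  unfold step
  split_ifs with h1 h2 h3
  · have := Classical.choose_spec (dense1 hT hf h2.1 h2.2.1 h2.2.2)
    exact ⟨this.1, this.2.1⟩
  · exact ⟨hp, fun _ _ => rfl⟩
  · have := Classical.choose_spec (dense2 hT hf hb h3.1 h3.2.1 h3.2.2.1 h3.2.2.2)
    exact ⟨this.1, this.2.1⟩
  · exact ⟨hp, fun _ _ => rfl⟩

lemma seqP_good {T : PreTree α} {a b : Ordinal} {f : α → Option ℚ}
    (hT : T.Aronszajn) (hf : IsS2Cond T a f) (hb : b < omega1)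
    (u : ℕ → α) (qe : ℕ → ℚ) : ∀ n, Good T a b f (seqP hT hf hb u qe n) := by
  intro n
  induction n with
  | zero => exact good_empty T a b f
  | succ n ih => exact (step_good hT hf hb u qe ih n).1

lemma seqP_chain {T : PreTree α} {a b : Ordinal} {f : α → Option ℚ}
    (hT : T.Aronszajn) (hf : IsS2Cond T a f) (hb : b < omega1)
    (u : ℕ → α) (qe : ℕ → ℚ) : ∀ {m n}, m ≤ n →
      Extends (seqP hT hf hb u qe n) (seqP hT hf hb u qe m) := by
  intro m n hmn
  induction n with
  | zero =>
      have : m = 0 := Nat.le_zero.mp hmn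
      subst this; exact fun _ _ => rfl
  | succ n ih =>
      rcases Nat.lt_or_ge m (n+1) with h | h
      · have h' : m ≤ n := Nat.lt_succ_iff.mp h
        intro x hx
        have h1 := ih h' x hx
        have h2 := (step_good hT hf hb u qe (seqP_good hT hf hb u qe n) n).2
        have h3 : seqP hT hf hb u qe n x ≠ none := by rw [h1]; exact hx
        rw [show seqP hT hf hb u qe (n+1) = step hT hf hb u qe (seqP hT hf hb u qe n) n
          from rfl, h2 x h3, h1]
      · have : m = n + 1 := le_antisymm hmn h
        subst this; exact fun _ _ => rfl

open Classical in
/-- the limit function on the new part -/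
noncomputable def glim {T : PreTree α} {a b : Ordinal} {f : α → Option ℚ}
    (hT : T.Aronszajn) (hf : IsS2Cond T a f) (hb : b < omega1)
    (u : ℕ → α) (qe : ℕ → ℚ) (x : α) : Option ℚ :=
  if T.lev x ≤ a then f x
  else if h : ∃ n, seqP hT hf hb u qe n x ≠ none then seqP hT hf hb u qe h.choose x
  else none

lemma glim_eq {T : PreTree α} {a b : Ordinal} {f : α → Option ℚ}
    (hT : T.Aronszajn) (hf : IsS2Cond T a f) (hb : b < omega1)
    (u : ℕ → α) (qe : ℕ → ℚ) {x : α} (hx : ¬ T.lev x ≤ a) {n : ℕ}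
    (hn : seqP hT hf hb u qe n x ≠ none) :
    glim hT hf hb u qe x = seqP hT hf hb u qe n x := by
  have hex : ∃ m, seqP hT hf hb u qe m x ≠ none := ⟨n, hn⟩
  simp only [glim, if_neg hx]
  rw [dif_pos hex]
  set m := hex.choose with hm
  have hmne : seqP hT hf hb u qe m x ≠ none := hex.choose_spec
  rcases le_total m n with h | h
  · rw [seqP_chain hT hf hb u qe h x hmne]
  · rw [seqP_chain hT hf hb u qe h x hn]

lemma glim_inv {T : PreTree α} {a b : Ordinal} {f : α → Option ℚ}
    (hT : T.Aronszajn) (hf : IsS2Cond T a f) (hb : b < omega1)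
    (u : ℕ → α) (qe : ℕ → ℚ) {x : α} (hx : ¬ T.lev x ≤ a)
    (hne : glim hT hf hb u qe x ≠ none) :
    ∃ n, seqP hT hf hb u qe n x = glim hT hf hb u qe x ∧
      seqP hT hf hb u qe n x ≠ none := by
  simp only [glim, if_neg hx] at hne ⊢
  by_cases h : ∃ n, seqP hT hf hb u qe n x ≠ none
  · rw [dif_pos h] at hne ⊢
    exact ⟨h.choose, rfl, hne⟩
  · rw [dif_neg h] at hne; exact absurd rfl hne

lemma stage1 {T : PreTree α} {a b : Ordinal} {f : α → Option ℚ}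
    (hT : T.Aronszajn) (hf : IsS2Cond T a f) (hb : b < omega1)
    (u : ℕ → α) (qe : ℕ → ℚ) (hu : ∀ x, T.lev x ≤ b → ∃ k, u k = x)
    {z : α} (hz1 : a < T.lev z) (hz2 : T.lev z ≤ b) :
    ∃ n, seqP hT hf hb u qe n z ≠ none := by
  obtain ⟨k2, hk2⟩ := hu z hz2
  set n : ℕ := Nat.pair (Nat.pair 0 k2) 0 with hn
  have h1 : (Nat.unpair (Nat.unpair n).1).1 = 0 := by
    rw [hn, Nat.unpair_pair, Nat.unpair_pair]
  have hz' : u (Nat.unpair (Nat.unpair n).1).2 = z := by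
    rw [hn, Nat.unpair_pair, Nat.unpair_pair, hk2]
  have H : Good T a b f (seqP hT hf hb u qe n) ∧
      a < T.lev (u (Nat.unpair (Nat.unpair n).1).2) ∧
      T.lev (u (Nat.unpair (Nat.unpair n).1).2) ≤ b :=
    ⟨seqP_good hT hf hb u qe n, by rw [hz']; exact hz1, by rw [hz']; exact hz2⟩
  have main : step hT hf hb u qe (seqP hT hf hb u qe n) n z ≠ none := by
    unfold step
    rw [if_pos h1, dif_pos H]
    exact hz' ▸ (Classical.choose_spec (dense1 hT hf H.1 H.2.1 H.2.2)).2.2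
  exact ⟨n+1, main⟩

lemma stage2 {T : PreTree α} {a b : Ordinal} {f : α → Option ℚ}
    (hT : T.Aronszajn) (hf : IsS2Cond T a f) (hb : b < omega1)
    (u : ℕ → α) (qe : ℕ → ℚ) (hu : ∀ x, T.lev x ≤ b → ∃ k, u k = x)
    (hqe : ∀ q, ∃ k, qe k = q)
    {x0 : α} {q0 : ℚ} (hx1 : a ≤ T.lev x0) (hx2 : T.lev x0 < b)
    {m : ℕ} {v : ℚ} (hm : gval T a f (seqP hT hf hb u qe m) x0 = some v)
    (hvq : v < q0) :
    ∃ y, T.lt x0 y ∧ T.lev y = b ∧ ∃ n, seqP hT hf hb u qe n y = some q0 := by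
  obtain ⟨k3, hk3⟩ := hu x0 hx2.le
  obtain ⟨k4, hk4⟩ := hqe q0
  set n : ℕ := Nat.pair (Nat.pair 1 (Nat.pair k3 k4)) m with hn
  have h1 : (Nat.unpair (Nat.unpair n).1).1 = 1 := by
    rw [hn, Nat.unpair_pair, Nat.unpair_pair]
  have hx0' : u (Nat.unpair (Nat.unpair (Nat.unpair n).1).2).1 = x0 := by
    rw [hn, Nat.unpair_pair, Nat.unpair_pair, Nat.unpair_pair, hk3]
  have hq0' : qe (Nat.unpair (Nat.unpair (Nat.unpair n).1).2).2 = q0 := by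
    rw [hn, Nat.unpair_pair, Nat.unpair_pair, Nat.unpair_pair, hk4]
  have hmn : m ≤ n := by rw [hn]; exact Nat.right_le_pair _ _
  have hgval : gval T a f (seqP hT hf hb u qe n) x0 = some v := by
    unfold gval at hm ⊢
    by_cases hc : T.lev x0 ≤ a
    · rw [if_pos hc] at hm ⊢; exact hm
    · rw [if_neg hc] at hm ⊢
      have hne : seqP hT hf hb u qe m x0 ≠ none := by rw [hm]; simp
      rw [seqP_chain hT hf hb u qe hmn x0 hne, hm]
  have H : Good T a b f (seqP hT hf hb u qe n) ∧
      a ≤ T.lev (u (Nat.unpair (Nat.unpair (Nat.unpair n).1).2).1) ∧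
      T.lev (u (Nat.unpair (Nat.unpair (Nat.unpair n).1).2).1) < b ∧
      ∃ v', gval T a f (seqP hT hf hb u qe n)
          (u (Nat.unpair (Nat.unpair (Nat.unpair n).1).2).1) = some v' ∧
        v' < qe (Nat.unpair (Nat.unpair (Nat.unpair n).1).2).2 := by
    refine ⟨seqP_good hT hf hb u qe n, ?_, ?_, v, ?_, ?_⟩
    · rw [hx0']; exact hx1
    · rw [hx0']; exact hx2
    · rw [hx0']; exact hgval
    · rw [hq0']; exact hvq
  have main : ∃ y, T.lt x0 y ∧ T.lev y = b ∧
      step hT hf hb u qe (seqP hT hf hb u qe n) n y = some q0 := by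
    unfold step
    rw [if_neg (show ¬ (Nat.unpair (Nat.unpair n).1).1 = 0 by rw [h1]; norm_num),
      dif_pos H]
    obtain ⟨y, hy1, hy2, hy3⟩ :=
      (Classical.choose_spec (dense2 hT hf hb H.1 H.2.1 H.2.2.1 H.2.2.2)).2.2
    exact ⟨y, hx0' ▸ hy1, hy2, hq0' ▸ hy3⟩
  obtain ⟨y, hy1, hy2, hy3⟩ := main
  exact ⟨y, hy1, hy2, n+1, hy3⟩

end S2Ext

/-- for an Aronszajn tree `T`, every condition of the poset `S₂(T)` can be
extended to any countable height. -/
theorem s2Cond_extension {α : Type} (T : PreTree α) (hT : T.Aronszajn)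
    (a : Ordinal) (f : α → Option ℚ) (hf : IsS2Cond T a f)
    (b : Ordinal) (hab : a ≤ b) (hb : b < omega1) :
    ∃ g : α → Option ℚ, IsS2Cond T b g ∧ ∀ x, f x ≠ none → g x = f x := by
  classical
  rcases eq_or_lt_of_le hab with rfl | hab'
  · exact ⟨f, hf, fun _ _ => rfl⟩
  have ht := hT.1.1
  -- the set of nodes of level ≤ b is countable and nonempty
  have hIic : (Set.Iic b).Countable := by
    have hb1 : b + 1 < omega1 := by
      rw [Ordinal.add_one_eq_succ]
      exact (Cardinal.isSuccLimit_ord (Cardinal.aleph0_le_aleph 1)).succ_lt hb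
    have hcard : (b + 1).card < Cardinal.aleph 1 := Cardinal.lt_ord.mp hb1
    have ha1 : Cardinal.aleph 1 = Order.succ Cardinal.aleph0 := by
      rw [← Cardinal.aleph_zero, ← Cardinal.aleph_succ]
      congr 1
      rw [← Ordinal.add_one_eq_succ, zero_add]
    have hcard2 : (b + 1).card ≤ Cardinal.aleph0 := by
      rw [ha1] at hcard
      exact Order.lt_succ_iff.mp hcard
    have hmk : #(Set.Iio (b + 1) : Set Ordinal) ≤ Cardinal.aleph0 := by
      rw [Ordinal.mk_Iio_ordinal]
      calc Cardinal.lift.{1} (b + 1).card ≤ Cardinal.lift.{1} Cardinal.aleph0 :=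
            Cardinal.lift_le.mpr hcard2
        _ = Cardinal.aleph0 := Cardinal.lift_aleph0
    have : (Set.Iio (b + 1) : Set Ordinal).Countable :=
      Set.countable_coe_iff.mp (Cardinal.mk_le_aleph0_iff.mp hmk)
    refine this.mono ?_
    intro o ho
    rw [Set.mem_Iio, Ordinal.add_one_eq_succ, Order.lt_succ_iff]
    exact ho
  have hcnt : {x : α | T.lev x ≤ b}.Countable := by
    have heq : {x : α | T.lev x ≤ b} = ⋃ o ∈ Set.Iic b, {x | T.lev x = o} := by
      ext x
      simp only [Set.mem_setOf_eq, Set.mem_iUnion, Set.mem_Iic]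
      exact ⟨fun h => ⟨T.lev x, h, rfl⟩, fun ⟨o, ho, h⟩ => h ▸ ho⟩
    rw [heq]
    exact hIic.biUnion (fun o ho => hT.1.2.2.1 o (lt_of_le_of_lt ho hb))
  have hne : {x : α | T.lev x ≤ b}.Nonempty := by
    obtain ⟨x0, hx0⟩ := hT.1.2.2.2.1 b hb
    exact ⟨x0, le_of_eq hx0⟩
  obtain ⟨u, hu0⟩ := hcnt.exists_eq_range hne
  have hu : ∀ x, T.lev x ≤ b → ∃ k, u k = x := by
    intro x hx
    have : x ∈ Set.range u := hu0 ▸ hx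
    exact this
  obtain ⟨qe, hqe0⟩ := exists_surjective_nat ℚ
  have hqe : ∀ q : ℚ, ∃ k, qe k = q := hqe0
  set g := S2Ext.glim hT hf hb u qe with hg
  -- g agrees with f on levels ≤ a
  have G1 : ∀ x, T.lev x ≤ a → g x = f x := by
    intro x hx
    rw [hg]
    simp only [S2Ext.glim, if_pos hx]
  -- domain of g
  have G2 : ∀ x, g x ≠ none ↔ T.lev x ≤ b := by
    intro x
    by_cases hxa : T.lev x ≤ a
    · rw [G1 x hxa]
      exact ⟨fun _ => le_trans hxa hab'.le, fun _ => (hf.1.2.1 x).mpr hxa⟩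
    · constructor
      · intro hne'
        obtain ⟨m, heq, hm⟩ := S2Ext.glim_inv hT hf hb u qe hxa hne'
        exact ((S2Ext.seqP_good hT hf hb u qe m).2.1 x hm).2
      · intro hxb
        obtain ⟨m, hm⟩ := S2Ext.stage1 hT hf hb u qe hu (not_le.mp hxa) hxb
        rw [hg, S2Ext.glim_eq hT hf hb u qe hxa hm]
        exact hm
  -- g is order preserving
  have G3 : ∀ x y qx qy, T.lt x y → g x = some qx → g y = some qy → qx < qy := by
    intro x y qx qy hxy hgx hgy
    have hlev := ht.2.1 x y hxy
    by_cases hya : T.lev y ≤ a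
    · have hxa : T.lev x ≤ a := (lt_of_lt_of_le hlev hya).le
      rw [G1 x hxa] at hgx
      rw [G1 y hya] at hgy
      exact hf.1.2.2 x y qx qy hxy hgx hgy
    · by_cases hxa : T.lev x ≤ a
      · rw [G1 x hxa] at hgx
        obtain ⟨m, heq, hm⟩ := S2Ext.glim_inv hT hf hb u qe hya (by rw [← hg] at *; rw [hgy]; simp)
        rw [← hg, hgy] at heq
        exact (S2Ext.seqP_good hT hf hb u qe m).2.2.2 x y qx qy hxy hxa hgx heq
      · obtain ⟨m1, heqx, hm1⟩ := S2Ext.glim_inv hT hf hb u qe hxa (by rw [← hg] at *; rw [hgx]; simp)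
        obtain ⟨m2, heqy, hm2⟩ := S2Ext.glim_inv hT hf hb u qe hya (by rw [← hg] at *; rw [hgy]; simp)
        rw [← hg, hgx] at heqx
        rw [← hg, hgy] at heqy
        have e1 : S2Ext.seqP hT hf hb u qe (max m1 m2) x = some qx := by
          rw [S2Ext.seqP_chain hT hf hb u qe (le_max_left m1 m2) x (by rw [heqx]; simp), heqx]
        have e2 : S2Ext.seqP hT hf hb u qe (max m1 m2) y = some qy := by
          rw [S2Ext.seqP_chain hT hf hb u qe (le_max_right m1 m2) y (by rw [heqy]; simp), heqy]
        exact (S2Ext.seqP_good hT hf hb u qe (max m1 m2)).2.2.1 x y qx qy hxy e1 e2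
  -- realization of exact values at level b
  have G4 : ∀ x v q, a ≤ T.lev x → T.lev x < b → g x = some v → v < q →
      ∃ y, T.lt x y ∧ T.lev y = b ∧ g y = some q := by
    intro x v q hx1 hx2 hgx hvq
    have hm : ∃ m, S2Ext.gval T a f (S2Ext.seqP hT hf hb u qe m) x = some v := by
      by_cases hxa : T.lev x ≤ a
      · refine ⟨0, ?_⟩
        rw [S2Ext.gval, if_pos hxa, ← G1 x hxa]
        exact hgx
      · obtain ⟨m, heq, hm⟩ := S2Ext.glim_inv hT hf hb u qe hxa (by rw [← hg] at *; rw [hgx]; simp)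
        refine ⟨m, ?_⟩
        rw [S2Ext.gval, if_neg hxa, heq, ← hg, hgx]
    obtain ⟨m, hm⟩ := hm
    obtain ⟨y, hy1, hy2, mm, hy3⟩ := S2Ext.stage2 hT hf hb u qe hu hqe hx1 hx2 hm hvq
    have hya : ¬ T.lev y ≤ a := by
      rw [hy2]
      exact not_le.mpr hab'
    refine ⟨y, hy1, hy2, ?_⟩
    rw [hg, S2Ext.glim_eq hT hf hb u qe hya (by rw [hy3]; simp)]
    exact hy3
  -- assemble the condition
  refine ⟨g, ⟨⟨hb, G2, G3⟩, ?_⟩, fun x hx => G1 x ((hf.1.2.1 x).mp hx)⟩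
  intro a₀ ha₀ nn xx qq hxl hxv
  choose r hr hrq using hxv
  have key : ∀ i, ∃ y, T.lt (xx i) y ∧ T.lev y = b ∧ g y = some (qq i) := by
    rcases lt_or_ge a₀ a with hcase | hcase
    · -- first climb to level a using the condition property of f
      have hgf : ∀ i, f (xx i) = some (r i) := by
        intro i
        have h := hr i
        rwa [G1 (xx i) (by rw [hxl i]; exact hcase.le)] at h
      obtain ⟨x', hx'⟩ := hf.2 a₀ hcase nn xx (fun i => (r i + qq i) / 2) hxl
        (fun i => ⟨r i, hgf i, by have := hrq i; linarith⟩)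
      intro i
      obtain ⟨h1, h2, h3⟩ := hx' i
      have hgx' : g (x' i) = some ((r i + qq i) / 2) := by
        rw [G1 (x' i) (le_of_eq h2)]
        exact h3
      obtain ⟨y, hy1, hy2, hy3⟩ := G4 (x' i) ((r i + qq i) / 2) (qq i)
        (le_of_eq h2.symm) (by rw [h2]; exact hab') hgx' (by have := hrq i; linarith)
      exact ⟨y, ht.1 _ _ _ h1 hy1, hy2, hy3⟩
    · intro i
      exact G4 (xx i) (r i) (qq i) (by rw [hxl i]; exact hcase)
        (by rw [hxl i]; exact ha₀) (hr i) (hrq i)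
  choose y hy1 hy2 hy3 using key
  exact ⟨y, fun i => ⟨hy1 i, hy2 i, hy3 i⟩⟩
end
end

section
/- Let T₁ be an Aronszajn tree, let T₂ be a disjoint isomorphic copy of T₁ with isomorphism i : T₁ → T₂, and let T = T₁ ∪ T₂ (an Aronszajn tree with two roots). Then for every n < ω, the set D_n = {f ∈ S₂(T) : dom f = T↾(α+1) for some α < ω₁, and for every x ∈ T₁ of level α, f(x) > n or f(i(x)) > n} is dense and open in the poset S₂(T). -/
noncomputable section

open Cardinal Set

universe u v w

/-- for `T = T₁ ∪ T₂` the union of an Aronszajn tree with a disjoint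
isomorphic copy of itself (via the isomorphism `i`), each set
`D_n = {f ∈ S₂(T) : every top-level x ∈ T₁ has f(x) > n or f(i(x)) > n}`
is dense and open in `S₂(T)`. -/
theorem doubled_tree_dense_open {α β : Type} (A : PreTree α) (B : PreTree β)
    (hA : A.Aronszajn) (i : α → β) (hbij : Function.Bijective i)
    (hiso : ∀ x y, A.lt x y ↔ B.lt (i x) (i y))
    (hlev : ∀ x, B.lev (i x) = A.lev x) (n : ℕ) :
    -- D_n is dense
    (∀ a f, IsS2Cond (sumTree A B) a f →
      ∃ b g, IsS2Cond (sumTree A B) b g ∧ a ≤ b ∧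
        (∀ x, f x ≠ none → g x = f x) ∧
        ∀ x : α, A.lev x = b →
          (∃ q : ℚ, g (Sum.inl x) = some q ∧ (n : ℚ) < q) ∨
          (∃ q : ℚ, g (Sum.inr (i x)) = some q ∧ (n : ℚ) < q)) ∧
    -- D_n is open
    (∀ a f b g, IsS2Cond (sumTree A B) a f → IsS2Cond (sumTree A B) b g → a ≤ b →
      (∀ x, f x ≠ none → g x = f x) →
      (∀ x : α, A.lev x = a →
        (∃ q : ℚ, f (Sum.inl x) = some q ∧ (n : ℚ) < q) ∨
        (∃ q : ℚ, f (Sum.inr (i x)) = some q ∧ (n : ℚ) < q)) →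
      (∀ x : α, A.lev x = b →
        (∃ q : ℚ, g (Sum.inl x) = some q ∧ (n : ℚ) < q) ∨
        (∃ q : ℚ, g (Sum.inr (i x)) = some q ∧ (n : ℚ) < q))) := by
  classical
  obtain ⟨⟨⟨htr, hmo, hli, hun⟩, hlt1, hcnt, hne, hinf, hext⟩, -⟩ := hA
  set T := sumTree A B with hTdef
  have hnea : Nonempty α := by
    obtain ⟨x, -⟩ := hne 0 (by simpa using nat_lt_omega1 0)
    exact ⟨x⟩
  set j := Function.invFun i with hjdef
  have hji : ∀ x, j (i x) = x := fun x => Function.leftInverse_invFun hbij.1 x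
  have hij : ∀ w, i (j w) = w := fun w => Function.invFun_eq (hbij.2 w)
  have hBlt : ∀ w w', B.lt w w' ↔ A.lt (j w) (j w') := by
    intro w w'
    have := hiso (j w) (j w')
    rw [hij, hij] at this
    exact this.symm
  have hBlev : ∀ w, B.lev w = A.lev (j w) := by
    intro w
    conv_lhs => rw [← hij w]
    exact hlev (j w)
  have hTlevl : ∀ x : α, T.lev (Sum.inl x) = A.lev x := fun _ => rfl
  have hTlevr : ∀ w : β, T.lev (Sum.inr w) = B.lev w := fun _ => rfl
  have hTmo : ∀ u v, T.lt u v → T.lev u < T.lev v := by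
    intro u v huv
    match u, v with
    | Sum.inl x, Sum.inl y => exact hmo x y huv
    | Sum.inr w, Sum.inr w' =>
      show B.lev w < B.lev w'
      rw [hBlev, hBlev]
      exact hmo _ _ ((hBlt w w').mp huv)
    | Sum.inl x, Sum.inr w => exact huv.elim
    | Sum.inr w, Sum.inl x => exact huv.elim
  have hTtr : ∀ u v w, T.lt u v → T.lt v w → T.lt u w := by
    intro u v w h1 h2
    match u, v, w with
    | Sum.inl _, Sum.inl _, Sum.inl _ => exact htr _ _ _ h1 h2
    | Sum.inr _, Sum.inr _, Sum.inr _ =>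
      exact (hBlt _ _).mpr (htr _ _ _ ((hBlt _ _).mp h1) ((hBlt _ _).mp h2))
    | Sum.inl _, Sum.inl _, Sum.inr _ => exact h2.elim
    | Sum.inl _, Sum.inr _, _ => exact h1.elim
    | Sum.inr _, Sum.inl _, _ => exact h1.elim
    | Sum.inr _, Sum.inr _, Sum.inl _ => exact h2.elim
  constructor
  · -- density
    intro a f hf
    obtain ⟨⟨ha1, hdom, hmon⟩, hrich⟩ := hf
    have hsucc : a + 1 < omega1 := by
      rw [Ordinal.add_one_eq_succ]
      exact (Cardinal.isSuccLimit_ord (Cardinal.aleph0_le_aleph 1)).succ_lt ha1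
    have haa1 : a < a + 1 := by
      rw [Ordinal.add_one_eq_succ]; exact Order.lt_succ a
    have hpredex : ∀ x : α, ∃ z, a < A.lev x → A.lt z x ∧ A.lev z = a := by
      intro x
      by_cases h : a < A.lev x
      · obtain ⟨z, hz, -⟩ := hun x a h
        exact ⟨z, fun _ => hz⟩
      · exact ⟨x, fun h' => absurd h' h⟩
    choose pz hpz using hpredex
    have hpzuniq : ∀ x, a < A.lev x → ∀ z, A.lt z x → A.lev z = a → z = pz x := by
      intro x h z h1 h2
      exact (hun x a h).unique ⟨h1, h2⟩ ⟨(hpz x h).1, (hpz x h).2⟩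
    have hSinf : ∀ z : α, A.lev z = a → {x | A.lt z x ∧ A.lev x = a + 1}.Infinite := by
      intro z hz
      have := hinf z
      rw [hz] at this
      exact this
    have hWex : ∀ z : α, ∃ W : ℚ × Bool → α, A.lev z = a →
        (∀ p, A.lt z (W p) ∧ A.lev (W p) = a + 1) ∧ Function.Injective W := by
      intro z
      by_cases hz : A.lev z = a
      · refine ⟨fun p => (Set.Infinite.natEmbedding _ (hSinf z hz)
          (Encodable.encode p) : _), fun _ => ⟨fun p => ?_, fun p p' hpp => ?_⟩⟩
        · exact (Set.Infinite.natEmbedding _ (hSinf z hz) (Encodable.encode p)).2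
        · exact Encodable.encode_injective
            ((Set.Infinite.natEmbedding _ (hSinf z hz)).injective (Subtype.ext hpp))
      · exact ⟨fun _ => z, fun h => absurd h hz⟩
    choose W hW using hWex
    have hdom' : ∀ u, T.lev u ≤ a → f u = some ((f u).getD 0) := by
      intro u h
      have := (hdom u).mpr h
      cases hfu : f u with
      | none => exact absurd hfu this
      | some r => simp [hfu]
    set rq : α → ℚ := fun z => (f (Sum.inl z)).getD 0 with hrqdef
    set sq : α → ℚ := fun z => (f (Sum.inr (i z))).getD 0 with hsqdef
    set v₁ : α → ℚ := fun x =>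
      if h : ∃ q : ℚ, rq (pz x) < q ∧ x = W (pz x) (q, true) then h.choose
      else max (rq (pz x)) (n : ℚ) + 1 with hv₁def
    set v₂ : α → ℚ := fun x =>
      if h : ∃ q : ℚ, sq (pz x) < q ∧ x = W (pz x) (q, false) then h.choose
      else max (sq (pz x)) (n : ℚ) + 1 with hv₂def
    have hv₁gt : ∀ x, rq (pz x) < v₁ x := by
      intro x
      rw [hv₁def]
      dsimp only
      split
      · next h => exact h.choose_spec.1
      · have := le_max_left (rq (pz x)) (n : ℚ); linarith
    have hv₂gt : ∀ x, sq (pz x) < v₂ x := by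
      intro x
      rw [hv₂def]
      dsimp only
      split
      · next h => exact h.choose_spec.1
      · have := le_max_left (sq (pz x)) (n : ℚ); linarith
    have hvbig : ∀ x, a < A.lev x → ((n : ℚ) < v₁ x ∨ (n : ℚ) < v₂ x) := by
      intro x hx
      by_cases h1 : ∃ q : ℚ, rq (pz x) < q ∧ x = W (pz x) (q, true)
      · right
        by_cases h2 : ∃ q : ℚ, sq (pz x) < q ∧ x = W (pz x) (q, false)
        · exfalso
          have e1 := h1.choose_spec.2
          have e2 := h2.choose_spec.2
          have hlevz : A.lev (pz x) = a := (hpz x hx).2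
          have := (hW (pz x) hlevz).2
            (e1 ▸ e2 : W (pz x) (h1.choose, true) = W (pz x) (h2.choose, false))
          simp at this
        · rw [hv₂def]
          dsimp only
          rw [dif_neg h2]
          have := le_max_right (sq (pz x)) (n : ℚ); linarith
      · left
        rw [hv₁def]
        dsimp only
        rw [dif_neg h1]
        have := le_max_right (rq (pz x)) (n : ℚ); linarith
    have hv₁hit : ∀ z q, A.lev z = a → rq z < q →
        ∃ x, A.lt z x ∧ A.lev x = a + 1 ∧ v₁ x = q := by
      intro z q hz hq
      refine ⟨W z (q, true), ((hW z hz).1 _).1, ((hW z hz).1 _).2, ?_⟩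
      have hxlev : a < A.lev (W z (q, true)) := by rw [((hW z hz).1 _).2]; exact haa1
      have hpzx : pz (W z (q, true)) = z :=
        (hpzuniq _ hxlev z ((hW z hz).1 _).1 hz).symm
      rw [hv₁def]
      dsimp only
      rw [hpzx]
      rw [dif_pos ⟨q, hq, rfl⟩]
      generalize_proofs h
      have h2 := h.choose_spec.2
      have h3 := (hW z hz).2 h2.symm
      exact (Prod.mk.injEq _ _ _ _ ▸ h3).1
    have hv₂hit : ∀ z q, A.lev z = a → sq z < q →
        ∃ x, A.lt z x ∧ A.lev x = a + 1 ∧ v₂ x = q := by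
      intro z q hz hq
      refine ⟨W z (q, false), ((hW z hz).1 _).1, ((hW z hz).1 _).2, ?_⟩
      have hxlev : a < A.lev (W z (q, false)) := by rw [((hW z hz).1 _).2]; exact haa1
      have hpzx : pz (W z (q, false)) = z :=
        (hpzuniq _ hxlev z ((hW z hz).1 _).1 hz).symm
      rw [hv₂def]
      dsimp only
      rw [hpzx]
      rw [dif_pos ⟨q, hq, rfl⟩]
      generalize_proofs h
      have h2 := h.choose_spec.2
      have h3 := (hW z hz).2 h2.symm
      exact (Prod.mk.injEq _ _ _ _ ▸ h3).1
    set g : α ⊕ β → Option ℚ := fun u =>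
      if f u ≠ none then f u else
      Sum.elim (fun x => if A.lev x = a + 1 then some (v₁ x) else none)
               (fun w => if B.lev w = a + 1 then some (v₂ (j w)) else none) u with hgdef
    have hg_low : ∀ u, f u ≠ none → g u = f u := by
      intro u h
      rw [hgdef]; dsimp only; rw [if_pos h]
    have hf_high : ∀ u, a < T.lev u → f u = none := by
      intro u h
      by_contra hc
      exact absurd ((hdom u).mp hc) (not_le.mpr h)
    have hg_inl : ∀ x : α, A.lev x = a + 1 → g (Sum.inl x) = some (v₁ x) := by
      intro x hx
      have hfn : f (Sum.inl x) = none := hf_high _ (by rw [hTlevl, hx]; exact haa1)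
      rw [hgdef]; simp [hfn, hx]
    have hg_inr : ∀ x : α, A.lev x = a + 1 → g (Sum.inr (i x)) = some (v₂ x) := by
      intro x hx
      have hlw : B.lev (i x) = a + 1 := by rw [hlev]; exact hx
      have hfn : f (Sum.inr (i x)) = none := hf_high _ (by rw [hTlevr, hlw]; exact haa1)
      rw [hgdef]; simp [hfn, hlw, hji]
    have hg_none : ∀ u, a + 1 < T.lev u → g u = none := by
      intro u hu
      have hfu : f u = none := hf_high u (lt_trans haa1 hu)
      cases u with
      | inl xx =>
        have hne2 : A.lev xx ≠ a + 1 := fun h => by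
          rw [hTlevl, h] at hu; exact lt_irrefl _ hu
        have hne3 : ¬ A.lev xx = Order.succ a := by
          rw [← Ordinal.add_one_eq_succ]; exact hne2
        rw [hgdef]; simp [hfu, hne2, hne3]
      | inr w =>
        have hne2 : B.lev w ≠ a + 1 := fun h => by
          rw [hTlevr, h] at hu; exact lt_irrefl _ hu
        have hne3 : ¬ B.lev w = Order.succ a := by
          rw [← Ordinal.add_one_eq_succ]; exact hne2
        rw [hgdef]; simp [hfu, hne2, hne3]
    have hgdom : ∀ u, g u ≠ none ↔ T.lev u ≤ a + 1 := by
      intro u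
      constructor
      · intro h
        by_contra hc
        exact h (hg_none u (not_le.mp hc))
      · intro h
        rcases le_or_gt (T.lev u) a with hle | hgt
        · rw [hg_low u ((hdom u).mpr hle)]; exact (hdom u).mpr hle
        · have heq : T.lev u = a + 1 := le_antisymm h
            (by rw [Ordinal.add_one_eq_succ]; exact Order.succ_le_of_lt hgt)
          cases u with
          | inl xx => rw [hg_inl xx heq]; simp
          | inr w =>
            have hh := hg_inr (j w) (by rw [← hBlev]; exact heq)
            rw [hij] at hh
            rw [hh]; simp
    have hstar : ∀ u q, T.lev u = a → (∃ r, f u = some r ∧ r < q) →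
        ∃ y, T.lt u y ∧ T.lev y = a + 1 ∧ g y = some q := by
      intro u q hu hfq
      obtain ⟨r, hfr, hrq⟩ := hfq
      cases u with
      | inl z =>
        have hz : A.lev z = a := hu
        have hrqz : rq z < q := by
          rw [hrqdef]; dsimp only; rw [hfr]; simpa using hrq
        obtain ⟨x, hx1, hx2, hx3⟩ := hv₁hit z q hz hrqz
        exact ⟨Sum.inl x, hx1, by rw [hTlevl, hx2], by rw [hg_inl x hx2, hx3]⟩
      | inr w =>
        have hzA : A.lev (j w) = a := by rw [← hBlev]; exact hu
        have hsqz : sq (j w) < q := by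
          rw [hsqdef]; dsimp only; rw [hij, hfr]; simpa using hrq
        obtain ⟨x', hx1, hx2, hx3⟩ := hv₂hit (j w) q hzA hsqz
        refine ⟨Sum.inr (i x'), ?_, ?_, ?_⟩
        · show B.lt w (i x')
          have := (hiso (j w) x').mp hx1
          rwa [hij] at this
        · rw [hTlevr, hlev, hx2]
        · rw [hg_inr x' hx2, hx3]
    have hgmon : ∀ u v qu qv, T.lt u v → g u = some qu → g v = some qv → qu < qv := by
      intro u v qu qv huv hgu hgv
      by_cases hfv : f v ≠ none
      · have hlevv : T.lev v ≤ a := (hdom v).mp hfv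
        have hlevu : T.lev u ≤ a := le_of_lt (lt_of_lt_of_le (hTmo u v huv) hlevv)
        have hfu : f u ≠ none := (hdom u).mpr hlevu
        exact hmon u v qu qv huv (by rw [← hg_low u hfu]; exact hgu)
          (by rw [← hg_low v hfv]; exact hgv)
      · push_neg at hfv
        have hlevv : T.lev v = a + 1 := by
          have h1 : T.lev v ≤ a + 1 := (hgdom v).mp (by rw [hgv]; simp)
          have h2 : a < T.lev v := by
            by_contra hc
            exact absurd ((hdom v).mpr (not_lt.mp hc)) (by simp [hfv])
          exact le_antisymm h1
            (by rw [Ordinal.add_one_eq_succ]; exact Order.succ_le_of_lt h2)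
        have hulev : T.lev u ≤ a := by
          have := hTmo u v huv
          rw [hlevv, Ordinal.add_one_eq_succ] at this
          exact Order.lt_succ_iff.mp this
        have hfu : f u ≠ none := (hdom u).mpr hulev
        have hfu' : f u = some qu := by rw [← hg_low u hfu]; exact hgu
        cases v with
        | inl xx =>
          have hx : A.lev xx = a + 1 := hlevv
          have hqv : v₁ xx = qv := by
            rw [hg_inl xx hx] at hgv; exact Option.some_inj.mp hgv
          cases u with
          | inr _ => exact huv.elim
          | inl u' =>
            have hu'x : A.lt u' xx := huv
            have hax : a < A.lev xx := by rw [hx]; exact haa1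
            have hz := hpz xx hax
            have hu'lev : A.lev u' ≤ a := hulev
            rcases eq_or_lt_of_le hu'lev with heq | hltu
            · have hupz : u' = pz xx := hpzuniq xx hax u' hu'x heq
              have hqu : qu = rq (pz xx) := by
                rw [hrqdef]; dsimp only; rw [← hupz, hfu']; rfl
              rw [hqu, ← hqv]; exact hv₁gt xx
            · have hne1 : u' ≠ pz xx := fun h => by
                rw [h, hz.2] at hltu; exact lt_irrefl a hltu
              have hnlt : ¬ A.lt (pz xx) u' := fun h => by
                have := hmo _ _ h
                rw [hz.2] at this
                exact absurd this (not_lt.mpr (le_of_lt hltu))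
              rcases hli xx u' (pz xx) hu'x hz.1 with h | h | h
              · exact absurd h hne1
              · have hfz : f (Sum.inl (pz xx)) = some (rq (pz xx)) :=
                  hdom' _ (le_of_eq (by rw [hTlevl, hz.2]))
                have hlt2 := hmon (Sum.inl u') (Sum.inl (pz xx)) qu (rq (pz xx)) h hfu' hfz
                calc qu < rq (pz xx) := hlt2
                  _ < v₁ xx := hv₁gt xx
                  _ = qv := hqv
              · exact absurd h hnlt
        | inr w =>
          have hx : B.lev w = a + 1 := hlevv
          have hgw : g (Sum.inr w) = some (v₂ (j w)) := by
            have hh := hg_inr (j w) (by rw [← hBlev]; exact hx)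
            rwa [hij] at hh
          have hqv : v₂ (j w) = qv := by
            rw [hgw] at hgv; exact Option.some_inj.mp hgv
          cases u with
          | inl _ => exact huv.elim
          | inr w' =>
            have hu'x : A.lt (j w') (j w) := (hBlt w' w).mp huv
            have hlevjw : A.lev (j w) = a + 1 := by rw [← hBlev]; exact hx
            have hax : a < A.lev (j w) := by rw [hlevjw]; exact haa1
            have hu'lev : A.lev (j w') ≤ a := by
              have h5 : B.lev w' ≤ a := hulev
              rwa [hBlev] at h5
            have hz := hpz (j w) hax
            rcases eq_or_lt_of_le hu'lev with heq | hltu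
            · have hupz : j w' = pz (j w) := hpzuniq _ hax _ hu'x heq
              have hqu : qu = sq (pz (j w)) := by
                rw [hsqdef]; dsimp only; rw [← hupz, hij, hfu']; rfl
              rw [hqu, ← hqv]; exact hv₂gt (j w)
            · have hne1 : j w' ≠ pz (j w) := fun h => by
                rw [h, hz.2] at hltu; exact lt_irrefl a hltu
              have hnlt : ¬ A.lt (pz (j w)) (j w') := fun h => by
                have := hmo _ _ h
                rw [hz.2] at this
                exact absurd this (not_lt.mpr (le_of_lt hltu))
              rcases hli (j w) (j w') (pz (j w)) hu'x hz.1 with h | h | h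
              · exact absurd h hne1
              · have hfz : f (Sum.inr (i (pz (j w)))) = some (sq (pz (j w))) :=
                  hdom' _ (le_of_eq (by rw [hTlevr, hlev, hz.2]))
                have hlt3 : T.lt (Sum.inr w') (Sum.inr (i (pz (j w)))) := by
                  show B.lt w' (i (pz (j w)))
                  have := (hiso (j w') (pz (j w))).mp h
                  rwa [hij] at this
                have hlt2 := hmon (Sum.inr w') (Sum.inr (i (pz (j w)))) qu
                  (sq (pz (j w))) hlt3 hfu' hfz
                calc qu < sq (pz (j w)) := hlt2
                  _ < v₂ (j w) := hv₂gt (j w)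
                  _ = qv := hqv
              · exact absurd h hnlt
    refine ⟨a + 1, g, ⟨⟨hsucc, hgdom, hgmon⟩, ?_⟩, le_of_lt haa1, hg_low, ?_⟩
    · -- richness
      intro a₀ ha₀ m x q hxlev hxq
      have ha₀' : a₀ ≤ a := by
        rw [Ordinal.add_one_eq_succ] at ha₀
        exact Order.lt_succ_iff.mp ha₀
      rcases eq_or_lt_of_le ha₀' with rfl | hltA
      · have hy : ∀ k, ∃ y, T.lt (x k) y ∧ T.lev y = a₀ + 1 ∧ g y = some (q k) := by
          intro k
          obtain ⟨r, hr1, hr2⟩ := hxq k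
          have hfk : f (x k) ≠ none := (hdom _).mpr (le_of_eq (hxlev k))
          have hfr : f (x k) = some r := by rw [← hg_low _ hfk]; exact hr1
          exact hstar (x k) (q k) (hxlev k) ⟨r, hfr, hr2⟩
        choose y hy using hy
        exact ⟨y, hy⟩
      · have hmid : ∀ k, ∃ q', (∃ r, f (x k) = some r ∧ r < q') ∧ q' < q k := by
          intro k
          obtain ⟨r, hr1, hr2⟩ := hxq k
          have hfk : f (x k) ≠ none := (hdom _).mpr (by rw [hxlev k]; exact le_of_lt hltA)
          have hfr : f (x k) = some r := by rw [← hg_low _ hfk]; exact hr1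
          obtain ⟨q', hq1, hq2⟩ := exists_between hr2
          exact ⟨q', ⟨r, hfr, hq1⟩, hq2⟩
        choose q' hq'1 hq'2 using hmid
        obtain ⟨y, hy⟩ := hrich a₀ hltA m x q' hxlev hq'1
        have hzz : ∀ k, ∃ z, T.lt (y k) z ∧ T.lev z = a + 1 ∧ g z = some (q k) :=
          fun k => hstar (y k) (q k) (hy k).2.1 ⟨q' k, (hy k).2.2, hq'2 k⟩
        choose z hzz using hzz
        exact ⟨z, fun k => ⟨hTtr _ _ _ (hy k).1 (hzz k).1, (hzz k).2.1, (hzz k).2.2⟩⟩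
    · -- D_n property
      intro x hx
      rcases hvbig x (by rw [hx]; exact haa1) with h | h
      · exact Or.inl ⟨v₁ x, hg_inl x hx, h⟩
      · exact Or.inr ⟨v₂ x, hg_inr x hx, h⟩
  · -- openness
    intro a f b g hf hg hab hfg hDa
    intro x hx
    rcases eq_or_lt_of_le hab with heq | hltab
    · subst heq
      rcases hDa x hx with ⟨qq, h1, h2⟩ | ⟨qq, h1, h2⟩
      · exact Or.inl ⟨qq, by rw [hfg _ (by simp [h1])]; exact h1, h2⟩
      · exact Or.inr ⟨qq, by rw [hfg _ (by simp [h1])]; exact h1, h2⟩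
    · obtain ⟨⟨ha1, hfdom, hfmon⟩, -⟩ := hf
      obtain ⟨⟨hb1, hgdom2, hgmon2⟩, -⟩ := hg
      have hax : a < A.lev x := by rw [hx]; exact hltab
      obtain ⟨z, ⟨hz1, hz2⟩, -⟩ := hun x a hax
      rcases hDa z hz2 with ⟨qq, h1, h2⟩ | ⟨qq, h1, h2⟩
      · left
        have hgz : g (Sum.inl z) = some qq := by rw [hfg _ (by simp [h1])]; exact h1
        have hgx : g (Sum.inl x) ≠ none :=
          (hgdom2 _).mpr (le_of_eq (by rw [hTlevl, hx]))
        obtain ⟨r, hr⟩ := Option.ne_none_iff_exists'.mp hgx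
        exact ⟨r, hr, lt_trans h2 (hgmon2 (Sum.inl z) (Sum.inl x) qq r hz1 hgz hr)⟩
      · right
        have hgz : g (Sum.inr (i z)) = some qq := by rw [hfg _ (by simp [h1])]; exact h1
        have hgx : g (Sum.inr (i x)) ≠ none :=
          (hgdom2 _).mpr (le_of_eq (by rw [hTlevr, hlev, hx]))
        obtain ⟨r, hr⟩ := Option.ne_none_iff_exists'.mp hgx
        have hlt2 : T.lt (Sum.inr (i z)) (Sum.inr (i x)) := (hiso z x).mp hz1
        exact ⟨r, hr, lt_trans h2 (hgmon2 _ _ qq r hlt2 hgz hr)⟩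
end
end
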